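/- Let θ ∈ [0,1]^V be a stable solution on a unit-weight graph G = (V, E). Then there exists a probability distribution D over subsets of V supported on independent sets of G such that for every v ∈ V, P_{S~D}[v ∈ S] = θ_v. -/

import Mathlib

open Finset

variable {V : Type*}

/-- A collaboration instance: symmetric matrix with entries in [0,1] and unit diagonal. -/
def IsCollab [Fintype V] (W : V → V → ℝ) : Prop :=
  (∀ u v, W u v = W v u) ∧ (∀ u v, 0 ≤ W u v ∧ W u v ≤ 1) ∧ (∀ v, W v v = 1)

/-- Unit-weight instance: off-diagonal entries are 0 or 1. -/
def UnitWeight (W : V → V → ℝ) : Prop :=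
  ∀ u v : V, u ≠ v → W u v = 0 ∨ W u v = 1

/-- Feasible solution: nonnegative with `W θ ≥ 1` coordinatewise. -/
def Feasible [Fintype V] (W : V → V → ℝ) (θ : V → ℝ) : Prop :=
  (∀ v, 0 ≤ θ v) ∧ ∀ v, 1 ≤ ∑ u, W v u * θ u

/-- Optimal total workload among feasible solutions. -/
noncomputable def OPT [Fintype V] (W : V → V → ℝ) : ℝ :=
  sInf {c : ℝ | ∃ θ : V → ℝ, Feasible W θ ∧ c = ∑ v, θ v}

/-- Optimal total workload among feasible solutions satisfying IR (`θ ≤ 1`). -/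
noncomputable def OPTIR [Fintype V] (W : V → V → ℝ) : ℝ :=
  sInf {c : ℝ | ∃ θ : V → ℝ, Feasible W θ ∧ (∀ v, θ v ≤ 1) ∧ c = ∑ v, θ v}

/-- An identity-independent signaling scheme: a finitely supported probability
distribution over signal functions `s : V → ℝ` whose values lie in a finite
signal space `sig ⊆ [0,1]`. -/
structure Scheme (V : Type*) [Fintype V] where
  sig : Finset ℝ
  sig_mem : ∀ θ ∈ sig, 0 ≤ θ ∧ θ ≤ 1
  supp : Finset (V → ℝ)
  val_mem : ∀ s ∈ supp, ∀ v : V, s v ∈ sig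
  p : (V → ℝ) → ℝ
  p_nonneg : ∀ s ∈ supp, 0 ≤ p s
  p_sum : ∑ s ∈ supp, p s = 1

/-- Expectation of `f` under the scheme's distribution. -/
noncomputable def Scheme.exp [Fintype V] (D : Scheme V) (f : (V → ℝ) → ℝ) : ℝ :=
  ∑ s ∈ D.supp, D.p s * f s

/-- Expected number of vertices receiving signal `θ`. -/
noncomputable def Scheme.Num [Fintype V] (D : Scheme V) (θ : ℝ) : ℝ :=
  D.exp (fun s => ∑ v, if s v = θ then (1 : ℝ) else 0)

/-- Expected total contribution entering vertices receiving signal `θ`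
(the neighborhood sum `∑_{u ∈ N(v)} W v u * s u` equals `∑_{u ≠ v} W v u * s u`). -/
noncomputable def Scheme.Contrib [Fintype V] [DecidableEq V] (D : Scheme V)
    (W : V → V → ℝ) (θ : ℝ) : ℝ :=
  D.exp (fun s => ∑ v, if s v = θ then ∑ u ∈ Finset.univ.erase v, W v u * s u else 0)

/-- The slack of signal `θ`. -/
noncomputable def Scheme.slack [Fintype V] [DecidableEq V] (D : Scheme V)
    (W : V → V → ℝ) (θ : ℝ) : ℝ :=
  D.Contrib W θ - (1 - θ) * D.Num θ

/-- Persuasiveness: zero slack at positive signals, nonnegative slack at signal 0. -/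
def Scheme.Persuasive [Fintype V] [DecidableEq V] (D : Scheme V) (W : V → V → ℝ) : Prop :=
  (∀ θ ∈ D.sig, 0 < θ → D.slack W θ = 0) ∧ ((0 : ℝ) ∈ D.sig → 0 ≤ D.slack W 0)

/-- Cost of a scheme: expected total signal value. -/
noncomputable def Scheme.cost [Fintype V] (D : Scheme V) : ℝ :=
  D.exp (fun s => ∑ v, s v)

/-- A stable solution: feasible, and each vertex's contribution is the least
nonnegative amount meeting its own feasibility given the others' contributions. -/
def Stable [Fintype V] [DecidableEq V] (W : V → V → ℝ) (θ : V → ℝ) : Prop :=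
  Feasible W θ ∧
  ∀ v : V, IsLeast {x : ℝ | 0 ≤ x ∧ 1 ≤ x + ∑ u ∈ Finset.univ.erase v, W v u * θ u} (θ v)


private lemma stable_tight {V : Type*} [Fintype V] [DecidableEq V] (W : V → V → ℝ) (θ : V → ℝ)
    (hθ : Stable W θ) (v : V) (hv : 0 < θ v) :
    θ v + ∑ u ∈ Finset.univ.erase v, W v u * θ u ≤ 1 := by
  obtain ⟨hfeas, hstab⟩ := hθ
  set s := ∑ u ∈ Finset.univ.erase v, W v u * θ u with hs
  have hx : θ v ≤ max 0 (1 - s) := (hstab v).2 ⟨le_max_left _ _, by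
    rcases le_total (1 - s) 0 with h|h
    · rw [max_eq_left h]; linarith
    · rw [max_eq_right h]; linarith⟩
  rcases le_total (1 - s) 0 with h|h
  · rw [max_eq_left h] at hx; linarith
  · rw [max_eq_right h] at hx; linarith

private lemma sum_mem_insert {V : Type*} [Fintype V] [DecidableEq V] (v : V) (g : Finset V → ℝ) :
    ∑ S ∈ Finset.univ.filter (fun S : Finset V => v ∈ S), g S
      = ∑ S ∈ Finset.univ.filter (fun S : Finset V => v ∉ S), g (insert v S) := by
  apply Finset.sum_nbij' (fun S => S.erase v) (fun S => insert v S)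
  · intro S hS
    simp only [Finset.mem_filter, Finset.mem_univ, true_and] at hS ⊢
    exact Finset.notMem_erase _ _
  · intro S hS
    simp only [Finset.mem_filter, Finset.mem_univ, true_and] at hS ⊢
    exact Finset.mem_insert_self _ _
  · intro S hS
    simp only [Finset.mem_filter, Finset.mem_univ, true_and] at hS
    exact Finset.insert_erase hS
  · intro S hS
    simp only [Finset.mem_filter, Finset.mem_univ, true_and] at hS
    exact Finset.erase_insert hS
  · intro S hS
    simp only [Finset.mem_filter, Finset.mem_univ, true_and] at hS
    rw [Finset.insert_erase hS]

private lemma stable_decomp {V : Type*} [Fintype V] [DecidableEq V] (W : V → V → ℝ)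
    (hW : IsCollab W) (hU : UnitWeight W) (θ : V → ℝ) (hθ : Stable W θ) (Q : Finset V) :
    ∃ p : Finset V → ℝ,
      (∀ S, 0 ≤ p S) ∧ (∑ S : Finset V, p S = 1) ∧
      (∀ S, p S ≠ 0 → S ⊆ Q ∧ ∀ u ∈ S, ∀ w ∈ S, u ≠ w → W u w = 0) ∧
      (∀ u ∈ Q, ∑ S ∈ Finset.univ.filter (fun S : Finset V => u ∈ S), p S = θ u) := by
  classical
  induction Q using Finset.induction_on with
  | empty =>
    refine ⟨fun S => if S = ∅ then 1 else 0, ?_, ?_, ?_, ?_⟩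
    · intro S; by_cases h : S = ∅ <;> simp [h]
    · simp
    · intro S hS
      have : S = ∅ := by by_contra h; simp [h] at hS
      subst this
      simp
    · intro u hu; simp at hu
  | @insert v Q hvQ IH =>
    obtain ⟨p, hp0, hp1, hpsupp, hpmarg⟩ := IH
    have hpv : ∀ S : Finset V, v ∈ S → p S = 0 := by
      intro S hvS
      by_contra h
      exact hvQ ((hpsupp S h).1 hvS)
    set avoid : Finset V → Prop := fun S => v ∉ S ∧ ∀ u ∈ S, W u v = 0 with havoid
    set T : ℝ := ∑ S ∈ Finset.univ.filter (fun S => avoid S), p S with hTdef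
    have hT0 : 0 ≤ T := Finset.sum_nonneg fun S _ => hp0 S
    set c : ℝ := θ v / T with hcdef
    have hθv0 : 0 ≤ θ v := hθ.1.1 v
    -- marginal upper bound for every vertex
    have hmargle : ∀ u : V, ∑ S : Finset V, (if u ∈ S then p S else 0) ≤ θ u := by
      intro u
      by_cases hu : u ∈ Q
      · rw [← Finset.sum_filter, hpmarg u hu]
      · have hz : ∀ S : Finset V, S ∈ Finset.univ → (if u ∈ S then p S else 0) = 0 := by
          intro S _
          split
          · by_contra h; exact hu ((hpsupp S h).1 ‹u ∈ S›)
          · rfl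
        rw [Finset.sum_eq_zero hz]
        exact hθ.1.1 u
    -- the key bound: if θ v > 0 then θ v ≤ T
    have hkey : 0 < θ v → θ v ≤ T := by
      intro hpos
      set B : Finset V := (Finset.univ.erase v).filter (fun u => W u v ≠ 0) with hBdef
      have hs1 : ∑ S ∈ Finset.univ.filter (fun S => ¬ avoid S), p S
          ≤ ∑ u ∈ B, θ u := by
        calc ∑ S ∈ Finset.univ.filter (fun S => ¬ avoid S), p S
            ≤ ∑ S ∈ Finset.univ.filter (fun S => ¬ avoid S),
                ∑ u ∈ B, (if u ∈ S then p S else 0) := by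
              apply Finset.sum_le_sum
              intro S hS
              by_cases hS0 : p S = 0
              · rw [hS0]
                apply Finset.sum_nonneg
                intro u _
                split <;> exact le_refl 0
              · obtain ⟨hSQ, _⟩ := hpsupp S hS0
                have hvS : v ∉ S := fun h => hvQ (hSQ h)
                rw [Finset.mem_filter] at hS
                have hex : ∃ u ∈ S, W u v ≠ 0 := by
                  by_contra hno
                  push_neg at hno
                  exact hS.2 ⟨hvS, hno⟩
                obtain ⟨u, huS, huW⟩ := hex
                have huB : u ∈ B := by
                  rw [hBdef, Finset.mem_filter, Finset.mem_erase]
                  exact ⟨⟨fun h => hvS (h ▸ huS), Finset.mem_univ u⟩, huW⟩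
                have step : (if u ∈ S then p S else 0) ≤ ∑ u ∈ B, (if u ∈ S then p S else 0) :=
                  Finset.single_le_sum (f := fun u => if u ∈ S then p S else 0)
                    (fun u' _ => by split <;> simp [hp0 S]) huB
                simpa [huS] using step
          _ = ∑ u ∈ B, ∑ S ∈ Finset.univ.filter (fun S => ¬ avoid S),
                (if u ∈ S then p S else 0) := Finset.sum_comm
          _ ≤ ∑ u ∈ B, θ u := by
              apply Finset.sum_le_sum
              intro u _
              refine le_trans ?_ (hmargle u)
              apply Finset.sum_le_sum_of_subset_of_nonneg (Finset.filter_subset _ _)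
              intro S _ _
              split
              exacts [hp0 S, le_refl 0]
      have hs2 : ∑ u ∈ B, θ u ≤ ∑ u ∈ Finset.univ.erase v, W v u * θ u := by
        have heq : ∀ u ∈ B, θ u = W v u * θ u := by
          intro u hu
          rw [hBdef, Finset.mem_filter, Finset.mem_erase] at hu
          have h1 : W u v = 1 := (hU u v hu.1.1).resolve_left hu.2
          rw [hW.1 v u, h1, one_mul]
        rw [Finset.sum_congr rfl heq]
        apply Finset.sum_le_sum_of_subset_of_nonneg
        · exact Finset.filter_subset _ _
        · intro u _ _
          exact mul_nonneg (hW.2.1 v u).1 (hθ.1.1 u)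
      have htight := stable_tight W θ hθ v hpos
      have hsplit : T + ∑ S ∈ Finset.univ.filter (fun S => ¬ avoid S), p S = 1 := by
        rw [hTdef, Finset.sum_filter_add_sum_filter_not, hp1]
      linarith
    have hc0 : 0 ≤ c := div_nonneg hθv0 hT0
    have hc1 : c ≤ 1 := by
      rcases eq_or_lt_of_le hθv0 with h|h
      · rw [hcdef, ← h]; norm_num
      · exact div_le_one_of_le₀ (hkey h) hT0
    have hcT : c * T = θ v := by
      rcases eq_or_lt_of_le hθv0 with h|h
      · rw [hcdef, ← h]; norm_num
      · have hTpos : 0 < T := lt_of_lt_of_le h (hkey h)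
        rw [hcdef]
        field_simp
    -- the new distribution
    set g : Finset V → ℝ := fun S =>
      if v ∈ S then (if avoid (S.erase v) then c * p (S.erase v) else 0)
      else (if avoid S then (1 - c) * p S else p S) with hgdef
    have hg_insert : ∀ S : Finset V, v ∉ S →
        g (insert v S) = (if avoid S then c * p S else 0) := by
      intro S hvS
      rw [hgdef]
      simp only [Finset.mem_insert_self, if_true, Finset.erase_insert hvS]
    have hg_not : ∀ S : Finset V, v ∉ S →
        g S = (if avoid S then (1 - c) * p S else p S) := by
      intro S hvS
      rw [hgdef]
      simp only [hvS, if_false]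
    have hg_comb : ∀ S : Finset V, v ∉ S → g (insert v S) + g S = p S := by
      intro S hvS
      rw [hg_insert S hvS, hg_not S hvS]
      split <;> ring
    refine ⟨g, ?_, ?_, ?_, ?_⟩
    · intro S
      rw [hgdef]
      dsimp only
      split
      · split
        · exact mul_nonneg hc0 (hp0 _)
        · exact le_refl 0
      · split
        · exact mul_nonneg (by linarith) (hp0 _)
        · exact hp0 _
    · have hsplit := Finset.sum_filter_add_sum_filter_not Finset.univ (fun S : Finset V => v ∈ S) g
      rw [← hsplit, sum_mem_insert v g, ← Finset.sum_add_distrib]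
      have : ∀ S ∈ Finset.univ.filter (fun S : Finset V => v ∉ S), g (insert v S) + g S = p S := by
        intro S hS
        rw [Finset.mem_filter] at hS
        exact hg_comb S hS.2
      rw [Finset.sum_congr rfl this]
      have h2 := Finset.sum_filter_add_sum_filter_not Finset.univ (fun S : Finset V => v ∈ S) p
      have h3 : ∑ S ∈ Finset.univ.filter (fun S : Finset V => v ∈ S), p S = 0 := by
        apply Finset.sum_eq_zero
        intro S hS
        rw [Finset.mem_filter] at hS
        exact hpv S hS.2
      rw [hp1] at h2
      linarith
    · intro S hS
      rw [hgdef] at hS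
      dsimp only at hS
      by_cases hvS : v ∈ S
      · rw [if_pos hvS] at hS
        have hav : avoid (S.erase v) := by
          by_contra h; rw [if_neg h] at hS; exact hS rfl
        have hpne : p (S.erase v) ≠ 0 := by
          intro h; rw [if_pos hav, h, mul_zero] at hS; exact hS rfl
        obtain ⟨hsub, hind⟩ := hpsupp _ hpne
        constructor
        · intro x hx
          rcases eq_or_ne x v with rfl|hxv
          · exact Finset.mem_insert_self _ _
          · exact Finset.mem_insert_of_mem (hsub (Finset.mem_erase.2 ⟨hxv, hx⟩))
        · intro u hu w hw huw
          rcases eq_or_ne u v with rfl|huv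
          · have hwv : w ≠ u := fun h => huw h.symm
            have hwe : w ∈ S.erase u := Finset.mem_erase.2 ⟨hwv, hw⟩
            rw [hW.1]
            exact hav.2 w hwe
          · rcases eq_or_ne w v with rfl|hwv
            · exact hav.2 u (Finset.mem_erase.2 ⟨huv, hu⟩)
            · exact hind u (Finset.mem_erase.2 ⟨huv, hu⟩) w (Finset.mem_erase.2 ⟨hwv, hw⟩) huw
      · rw [if_neg hvS] at hS
        have hpne : p S ≠ 0 := by
          intro h
          rw [h] at hS
          simp at hS
        obtain ⟨hsub, hind⟩ := hpsupp S hpne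
        exact ⟨hsub.trans (Finset.subset_insert v Q), hind⟩
    · intro u hu
      rw [Finset.sum_filter]
      have hsplit := Finset.sum_filter_add_sum_filter_not Finset.univ (fun S : Finset V => v ∈ S)
        (fun S => if u ∈ S then g S else 0)
      rw [← hsplit, sum_mem_insert v (fun S => if u ∈ S then g S else 0)]
      rcases Finset.mem_insert.1 hu with rfl|huQ
      · -- u = v
        have e1 : ∑ S ∈ Finset.univ.filter (fun S : Finset V => u ∉ S),
            (if u ∈ insert u S then g (insert u S) else 0)
            = ∑ S ∈ Finset.univ.filter (fun S : Finset V => u ∉ S),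
              (if avoid S then c * p S else 0) := by
          apply Finset.sum_congr rfl
          intro S hS
          rw [Finset.mem_filter] at hS
          rw [if_pos (Finset.mem_insert_self _ _), hg_insert S hS.2]
        have e2 : ∑ S ∈ Finset.univ.filter (fun S : Finset V => u ∉ S),
            (if u ∈ S then g S else 0) = 0 := by
          apply Finset.sum_eq_zero
          intro S hS
          rw [Finset.mem_filter] at hS
          rw [if_neg hS.2]
        have e3 : ∑ S ∈ Finset.univ.filter (fun S : Finset V => u ∉ S),
            (if avoid S then c * p S else 0) = c * T := by
          rw [← Finset.sum_filter, Finset.filter_filter]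
          have hfil : Finset.univ.filter (fun S : Finset V => u ∉ S ∧ avoid S)
              = Finset.univ.filter (fun S : Finset V => avoid S) := by
            apply Finset.filter_congr
            intro S _
            constructor
            · exact fun h => h.2
            · exact fun h => ⟨h.1, h⟩
          rw [hfil, hTdef, Finset.mul_sum]
        rw [e1, e2, e3, hcT, add_zero]
      · -- u ∈ Q, u ≠ v
        have huv : u ≠ v := fun h => hvQ (h ▸ huQ)
        have e1 : ∀ S ∈ Finset.univ.filter (fun S : Finset V => v ∉ S),
            (if u ∈ insert v S then g (insert v S) else 0) + (if u ∈ S then g S else 0)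
            = (if u ∈ S then p S else 0) := by
          intro S hS
          rw [Finset.mem_filter] at hS
          have hmem : u ∈ insert v S ↔ u ∈ S := by
            rw [Finset.mem_insert]
            exact ⟨fun h => h.resolve_left huv, Or.inr⟩
          by_cases huS : u ∈ S
          · rw [if_pos (hmem.2 huS), if_pos huS, if_pos huS, hg_comb S hS.2]
          · rw [if_neg (fun h => huS (hmem.1 h)), if_neg huS, if_neg huS, add_zero]
        rw [← Finset.sum_add_distrib, Finset.sum_congr rfl e1]
        have h2 := Finset.sum_filter_add_sum_filter_not Finset.univ (fun S : Finset V => v ∈ S)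
          (fun S => if u ∈ S then p S else 0)
        have h3 : ∑ S ∈ Finset.univ.filter (fun S : Finset V => v ∈ S),
            (if u ∈ S then p S else 0) = 0 := by
          apply Finset.sum_eq_zero
          intro S hS
          rw [Finset.mem_filter] at hS
          rw [hpv S hS.2]
          split <;> rfl
        have h4 : ∑ S : Finset V, (if u ∈ S then p S else 0) = θ u := by
          rw [← Finset.sum_filter, hpmarg u huQ]
        linarith

/-- Any stable solution `θ ∈ [0,1]^V` on a unit-weight graph is the
marginal of a probability distribution over independent sets: there is a distribution `p`
over subsets of `V`, supported on independent sets, with `P[v ∈ S] = θ v` for all `v`. -/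
theorem statement12 (V : Type*) [Fintype V] [DecidableEq V] (W : V → V → ℝ)
    (hW : IsCollab W) (hU : UnitWeight W)
    (θ : V → ℝ) (hθ : Stable W θ) :
    ∃ p : Finset V → ℝ,
      (∀ S : Finset V, 0 ≤ p S) ∧
      (∑ S : Finset V, p S = 1) ∧
      (∀ S : Finset V, p S ≠ 0 → ∀ u ∈ S, ∀ v ∈ S, u ≠ v → W u v = 0) ∧
      (∀ v : V, ∑ S ∈ Finset.univ.filter (fun S : Finset V => v ∈ S), p S = θ v) := by
  classical
  obtain ⟨p, h1, h2, h3, h4⟩ := stable_decomp W hW hU θ hθ Finset.univ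
  exact ⟨p, h1, h2, fun S hS => (h3 S hS).2, fun v => h4 v (Finset.mem_univ v)⟩
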